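/- arXiv:2010.03359 — 2 statements merged into one kernel-verified Lean document; each statement's English description precedes it below -/
import Mathlib

section
/- Let E be a finite-dimensional algebra over a field k of characteristic zero with Jacobson radical J, and let T ⊆ E be a subalgebra splitting E → E/J. Then for any semisimple subalgebra A ⊆ E there exists j ∈ J such that (1+j) A (1+j)⁻¹ ⊆ T. -/
open LinearMap Finset

set_option linter.unusedSectionVars false

section Casimir

variable (k A : Type*) [Field k] [CharZero k] [Ring A] [Algebra k A]
  [FiniteDimensional k A]

/-- The (noncommutative) trace form on a finite-dimensional algebra. -/
noncomputable def ncTraceForm : LinearMap.BilinForm k A :=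
  LinearMap.compr₂ (LinearMap.mul k A)
    ((LinearMap.trace k A) ∘ₗ (Algebra.lmul k A).toLinearMap)

variable {k A}

lemma ncTraceForm_apply (a b : A) :
    ncTraceForm k A a b = LinearMap.trace k A (Algebra.lmul k A (a * b)) := rfl

lemma ncTraceForm_symm (a b : A) : ncTraceForm k A a b = ncTraceForm k A b a := by
  rw [ncTraceForm_apply, ncTraceForm_apply, map_mul (Algebra.lmul k A) a b,
    map_mul (Algebra.lmul k A) b a]
  exact LinearMap.trace_mul_comm k _ _

lemma ncTraceForm_assoc (x y w : A) :
    ncTraceForm k A (x * y) w = ncTraceForm k A x (y * w) := by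
  rw [ncTraceForm_apply, ncTraceForm_apply, mul_assoc]

lemma ncTraceForm_cyc (a x y : A) :
    ncTraceForm k A (a * x) y = ncTraceForm k A x (y * a) := by
  rw [ncTraceForm_apply, ncTraceForm_apply,
    show a * x * y = a * (x * y) by rw [mul_assoc],
    show x * (y * a) = x * y * a by rw [mul_assoc], map_mul (Algebra.lmul k A) a (x * y),
    map_mul (Algebra.lmul k A) (x * y) a]
  exact LinearMap.trace_mul_comm k _ _

lemma ncTraceForm_isSymm : (ncTraceForm k A).IsSymm := ⟨fun x y => by
  simpa using ncTraceForm_symm (k := k) x y⟩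

variable [IsSemisimpleRing A]

lemma ncTraceForm_nondegenerate :
    (ncTraceForm k A).Nondegenerate := by
  set B := ncTraceForm k A
  set R : Submodule A A :=
    { carrier := { a : A | ∀ b : A, B a b = 0 }
      add_mem' := fun {x y} hx hy b => by
        rw [map_add, LinearMap.add_apply, hx b, hy b, add_zero]
      zero_mem' := fun b => by simp
      smul_mem' := fun c a ha b => by
        have h1 : B (c * a) b = B a (b * c) := ncTraceForm_cyc c a b
        have h2 : (c • a) = c * a := rfl
        rw [h2, h1, ha (b * c)] } with hR
  have memR : ∀ a : A, (a ∈ R ↔ ∀ b : A, B a b = 0) := fun a => Iff.rfl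
  -- `R` is also closed under right multiplication
  have Rmul_right : ∀ r ∈ R, ∀ c : A, r * c ∈ R := by
    intro r hr c
    rw [memR] at hr ⊢
    intro b
    rw [ncTraceForm_assoc]
    exact hr _
  have hRbot : ∀ r ∈ R, r = 0 := by
    obtain ⟨C, hC⟩ := exists_isCompl R
    obtain ⟨e, he, g, hg, heg⟩ :=
      Submodule.mem_sup.mp (by rw [hC.sup_eq_top]; trivial :
        (1 : A) ∈ R ⊔ C)
    have hg' : g = 1 - e := eq_sub_of_add_eq' heg
    have key : ∀ r ∈ R, r = r * e := by
      intro r hr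
      have h1 : r * g = r - r * e := by rw [hg', mul_sub, mul_one]
      have hrg : r * g ∈ R ⊓ C := by
        constructor
        · rw [h1]
          exact R.sub_mem hr (Rmul_right r hr e)
        · exact C.smul_mem r hg
      rw [hC.inf_eq_bot] at hrg
      have := h1.symm.trans hrg
      -- r - r * e = 0
      have h2 : r - r * e = 0 := by rw [← h1, hrg]
      have := sub_eq_zero.mp h2
      exact this
    -- `e` is idempotent with zero trace
    have hee : e = e * e := key e he
    have htre : LinearMap.trace k A (Algebra.lmul k A e) = 0 := by
      have := (memR e).mp he 1
      rwa [ncTraceForm_apply, mul_one] at this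
    have hL : Algebra.lmul k A e ∘ₗ Algebra.lmul k A e = Algebra.lmul k A e := by
      rw [← Module.End.mul_eq_comp, ← map_mul, ← hee]
    have hproj : LinearMap.IsProj (LinearMap.range (Algebra.lmul k A e))
        (Algebra.lmul k A e) := by
      constructor
      · intro x; exact LinearMap.mem_range_self _ x
      · rintro x ⟨y, rfl⟩
        exact congrFun (congrArg DFunLike.coe hL) y
    have htr := hproj.trace
    rw [htre] at htr
    have hrk0 : Module.finrank k (LinearMap.range (Algebra.lmul k A e)) = 0 := by
      exact_mod_cast htr.symm
    have hrange : LinearMap.range (Algebra.lmul k A e) = ⊥ :=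
      Submodule.finrank_eq_zero.mp hrk0
    have he0 : e = 0 := by
      have h3 : Algebra.lmul k A e 1 ∈ (⊥ : Submodule k A) := by
        rw [← hrange]; exact LinearMap.mem_range_self _ 1
      simpa using h3
    intro r hr
    rw [key r hr, he0, mul_zero]
  refine ⟨?_, fun m hm => hRbot m ((memR m).mpr fun b => (ncTraceForm_symm m b).trans (hm b))⟩
  intro m hm
  exact hRbot m ((memR m).mpr hm)

variable (k A)

/-- Fixed basis of `A`. -/
noncomputable def casBasis : Module.Basis (Fin (Module.finrank k A)) k A := Module.finBasis k A

/-- Dual basis with respect to the trace form. -/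
noncomputable def casDual : Module.Basis (Fin (Module.finrank k A)) k A :=
  (ncTraceForm k A).dualBasis ncTraceForm_nondegenerate (casBasis k A)

variable {k A}

lemma cas_repr_dual (v : A) (i : Fin (Module.finrank k A)) :
    (casDual k A).repr v i = ncTraceForm k A v (casBasis k A i) :=
  (ncTraceForm k A).dualBasis_repr_apply ncTraceForm_nondegenerate (casBasis k A) v i

lemma cas_repr_basis (u : A) (i : Fin (Module.finrank k A)) :
    (casBasis k A).repr u i = ncTraceForm k A u (casDual k A i) := by
  have hflip : (ncTraceForm k A).flip.dualBasis
      (ncTraceForm_nondegenerate (k := k) (A := A)).flip (casDual k A) = casBasis k A := by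
    exact (ncTraceForm k A).dualBasis_flip_dualBasis ncTraceForm_nondegenerate (casBasis k A)
  conv_lhs => rw [← hflip]
  rw [(ncTraceForm k A).flip.dualBasis_repr_apply _ (casDual k A) u i]
  exact (ncTraceForm_isSymm (k := k)).eq (casDual k A i) u

lemma cas_exp_basis (u : A) :
    u = ∑ i, ncTraceForm k A u (casDual k A i) • casBasis k A i := by
  conv_lhs => rw [← (casBasis k A).sum_repr u]
  exact Finset.sum_congr rfl fun i _ => by rw [cas_repr_basis]

lemma cas_exp_dual (v : A) :
    v = ∑ i, ncTraceForm k A v (casBasis k A i) • casDual k A i := by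
  conv_lhs => rw [← (casDual k A).sum_repr v]
  exact Finset.sum_congr rfl fun i _ => by rw [cas_repr_dual]

/-- The key swap identity: the Casimir tensor commutes with `A`. -/
lemma cas_swap {V : Type*} [AddCommGroup V] [Module k V]
    (F : A →ₗ[k] A →ₗ[k] V) (a : A) :
    ∑ i, F (a * casBasis k A i) (casDual k A i)
      = ∑ i, F (casBasis k A i) (casDual k A i * a) := by
  set B := ncTraceForm k A
  set b := casBasis k A
  set f := casDual k A
  have lhs_eq : ∀ i, F (a * b i) (f i) = ∑ j, B (a * b i) (f j) • F (b j) (f i) := by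
    intro i
    conv_lhs => rw [cas_exp_basis (k := k) (a * b i)]
    rw [map_sum, LinearMap.sum_apply]
    exact Finset.sum_congr rfl fun j _ => by rw [map_smul, LinearMap.smul_apply]
  have rhs_eq : ∀ i, F (b i) (f i * a) = ∑ j, B (f i * a) (b j) • F (b i) (f j) := by
    intro i
    conv_lhs => rw [cas_exp_dual (k := k) (f i * a)]
    rw [map_sum]
    exact Finset.sum_congr rfl fun j _ => by rw [map_smul]
  calc ∑ i, F (a * b i) (f i) = ∑ i, ∑ j, B (a * b i) (f j) • F (b j) (f i) :=
        Finset.sum_congr rfl fun i _ => lhs_eq i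
    _ = ∑ j, ∑ i, B (a * b i) (f j) • F (b j) (f i) := Finset.sum_comm
    _ = ∑ j, ∑ i, B (f j * a) (b i) • F (b j) (f i) := by
        refine Finset.sum_congr rfl fun j _ => Finset.sum_congr rfl fun i _ => ?_
        congr 1
        rw [ncTraceForm_cyc a (b i) (f j)]
        exact ncTraceForm_symm (k := k) (b i) ((f j) * a)
    _ = ∑ i, F (b i) (f i * a) := (Finset.sum_congr rfl fun i _ => (rhs_eq i).symm)

variable (k A)

/-- The Casimir element. -/
noncomputable def casZ : A := ∑ i, casBasis k A i * casDual k A i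

variable {k A}

lemma casZ_comm (a : A) : a * casZ k A = casZ k A * a := by
  have h := cas_swap (LinearMap.mul k A) a
  simp only [LinearMap.mul_apply'] at h
  calc a * casZ k A = ∑ i, a * casBasis k A i * casDual k A i := by
        rw [casZ, Finset.mul_sum]
        exact Finset.sum_congr rfl fun i _ => (mul_assoc _ _ _).symm
    _ = ∑ i, casBasis k A i * (casDual k A i * a) := h
    _ = ∑ i, casBasis k A i * casDual k A i * a :=
        Finset.sum_congr rfl fun i _ => (mul_assoc _ _ _).symm
    _ = casZ k A * a := by rw [casZ, Finset.sum_mul]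

lemma cas_trace_formula (u : A) :
    LinearMap.trace k A (Algebra.lmul k A u)
      = ∑ i, ncTraceForm k A (u * casBasis k A i) (casDual k A i) := by
  rw [LinearMap.trace_eq_matrix_trace k (casBasis k A), Matrix.trace]
  refine Finset.sum_congr rfl fun i _ => ?_
  rw [Matrix.diag_apply, LinearMap.toMatrix_apply, ← cas_repr_basis]
  rfl

lemma casZ_pair (u : A) :
    ncTraceForm k A (casZ k A) u = LinearMap.trace k A (Algebra.lmul k A u) := by
  rw [cas_trace_formula u, casZ]
  have h1 : ncTraceForm k A (∑ i, casBasis k A i * casDual k A i) u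
      = ∑ i, ncTraceForm k A (casBasis k A i * casDual k A i) u := by
    rw [map_sum, LinearMap.sum_apply]
  rw [h1]
  refine Finset.sum_congr rfl fun i _ => ?_
  rw [ncTraceForm_assoc (casBasis k A i) (casDual k A i) u,
    ← ncTraceForm_cyc u (casBasis k A i) (casDual k A i)]

lemma casZ_inv : ∃ w : A, casZ k A * w = 1 ∧ w * casZ k A = 1 ∧ ∀ a : A, w * a = a * w := by
  set z := casZ k A with hzdef
  have hinj : Function.Injective (Algebra.lmul k A z) := by
    rw [← LinearMap.ker_eq_bot, Submodule.eq_bot_iff]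
    intro c hc
    have hzc : z * c = 0 := by simpa using hc
    apply (ncTraceForm_nondegenerate (k := k) (A := A)).1
    intro d
    have h1 : ncTraceForm k A c d = ncTraceForm k A z (c * d) := by
      rw [casZ_pair (k := k) (c * d), ncTraceForm_apply]
    rw [h1, ← ncTraceForm_assoc z c d, hzc]
    simp [ncTraceForm_apply]
  have hsurj : Function.Surjective (Algebra.lmul k A z) :=
    LinearMap.surjective_of_injective hinj
  obtain ⟨w, hw⟩ := hsurj 1
  have hzw : z * w = 1 := by simpa using hw
  have hwz : w * z = 1 := by
    apply hinj
    show z * (w * z) = z * 1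
    rw [← mul_assoc, hzw, one_mul, mul_one]
  refine ⟨w, hzw, hwz, fun a => ?_⟩
  calc w * a = w * a * (z * w) := by rw [hzw, mul_one]
    _ = w * (a * z) * w := by noncomm_ring
    _ = w * (z * a) * w := by rw [casZ_comm a]
    _ = (w * z) * (a * w) := by noncomm_ring
    _ = a * w := by rw [hwz, one_mul]

end Casimir

section Proj

variable {k E : Type*} [Field k] [Ring E] [Algebra k E]

/-- From a splitting subalgebra we obtain an algebra endomorphism of `E` with values in `T`
which is the identity modulo the radical. -/
lemma exists_proj (T : Subalgebra k E)
    (hT : ∀ x : E, ∃! t : T, x - (t : E) ∈ (⊥ : TwoSidedIdeal E).jacobson) :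
    ∃ π : E →ₐ[k] E, (∀ x, π x ∈ T) ∧
      ∀ x, x - π x ∈ (⊥ : TwoSidedIdeal E).jacobson := by
  classical
  set J := (⊥ : TwoSidedIdeal E).jacobson with hJ
  choose p hp using hT
  have punique : ∀ (x : E) (t : T), x - (t : E) ∈ J → t = p x := fun x t ht => (hp x).2 t ht
  have pspec : ∀ x : E, x - (p x : E) ∈ J := fun x => (hp x).1
  refine ⟨{ toFun := fun x => ↑(p x)
            map_one' := ?_
            map_mul' := ?_
            map_zero' := ?_
            map_add' := ?_
            commutes' := ?_ }, fun x => (p x).2, pspec⟩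
  · have h1 : (⟨1, T.one_mem⟩ : T) = p 1 := punique 1 ⟨1, T.one_mem⟩ (by simp)
    exact congrArg Subtype.val h1.symm
  · intro x y
    have hmem : x * y - ((p x * p y : T) : E) ∈ J := by
      have heq : x * y - ((p x * p y : T) : E)
          = x * (y - (p y : E)) + (x - (p x : E)) * (p y : E) := by
        push_cast
        noncomm_ring
      rw [heq]
      exact J.add_mem (J.mul_mem_left _ _ (pspec y)) (J.mul_mem_right _ _ (pspec x))
    have h1 : p x * p y = p (x * y) := punique (x * y) _ hmem
    exact congrArg Subtype.val h1.symm
  · have h1 : (0 : T) = p 0 := punique 0 0 (by simp)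
    exact congrArg Subtype.val h1.symm
  · intro x y
    have hmem : x + y - ((p x + p y : T) : E) ∈ J := by
      have heq : x + y - ((p x + p y : T) : E) = (x - (p x : E)) + (y - (p y : E)) := by
        push_cast
        noncomm_ring
      rw [heq]
      exact J.add_mem (pspec x) (pspec y)
    have h1 : p x + p y = p (x + y) := punique (x + y) _ hmem
    exact congrArg Subtype.val h1.symm
  · intro c
    have h1 : (algebraMap k T c) = p (algebraMap k E c) := by
      refine punique _ _ ?_
      have h2 : ((algebraMap k T c : T) : E) = algebraMap k E c := by
        simp [Subalgebra.algebraMap_eq]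
      rw [h2, sub_self]
      exact J.zero_mem
    calc ((p (algebraMap k E c)) : E) = ((algebraMap k T c : T) : E) := by rw [← h1]
      _ = algebraMap k E c := by simp [Subalgebra.algebraMap_eq]

end Proj


/-- If `j` lies in the Jacobson radical, then `1 + j` is a unit. -/
lemma isUnit_one_add_of_mem_jacobson_bot {E : Type*} [Ring E] {j : E}
    (hj : j ∈ (⊥ : TwoSidedIdeal E).jacobson) : IsUnit (1 + j) := by
  have hleft : ∀ x ∈ (⊥ : TwoSidedIdeal E).jacobson, ∃ z : E, z * (1 + x) = 1 := by
    intro x hx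
    obtain ⟨z, hz⟩ := TwoSidedIdeal.mem_jacobson_iff.mp hx 1
    rw [TwoSidedIdeal.mem_bot] at hz
    refine ⟨z, ?_⟩
    have h1 : z * 1 * x + z - 1 = 0 := hz
    rw [mul_one] at h1
    have h2 : z * x + z = 1 := by
      have := sub_eq_zero.mp h1
      exact this
    rw [mul_add, mul_one, add_comm]
    exact h2
  obtain ⟨z, hz⟩ := hleft j hj
  have hz' : z = 1 + -(z * j) := by
    rw [mul_add, mul_one] at hz
    have h3 := eq_sub_of_add_eq hz
    rw [sub_eq_add_neg] at h3
    exact h3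
  have hmem : -(z * j) ∈ (⊥ : TwoSidedIdeal E).jacobson :=
    TwoSidedIdeal.neg_mem _ (TwoSidedIdeal.mul_mem_left _ _ _ hj)
  obtain ⟨v, hv⟩ := hleft _ hmem
  rw [← hz'] at hv
  have hvz : v = 1 + j := by
    calc v = v * (z * (1 + j)) := by rw [hz, mul_one]
      _ = (v * z) * (1 + j) := by rw [mul_assoc]
      _ = 1 + j := by rw [hv, one_mul]
  exact ⟨⟨1 + j, z, by rw [← hvz]; exact hv, hz⟩, rfl⟩

/-- Conjugacy part of the Wedderburn–Malcev theorem: let `E` be a finite-dimensional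
algebra over a field `k` of characteristic zero with Jacobson radical `J`, and let
`T ⊆ E` be a subalgebra splitting the quotient `E → E/J`.  Then for any semisimple
subalgebra `A ⊆ E` there is `j ∈ J` such that `1 + j` is invertible and
`(1+j) A (1+j)⁻¹ ⊆ T`. -/
theorem wedderburn_malcev_conjugacy
    (k E : Type*) [Field k] [CharZero k] [Ring E] [Algebra k E] [FiniteDimensional k E]
    (T : Subalgebra k E)
    (hT : ∀ x : E, ∃! t : T, x - (t : E) ∈ (⊥ : TwoSidedIdeal E).jacobson)
    (A : Subalgebra k E) (hA : IsSemisimpleRing A) :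
    ∃ j ∈ (⊥ : TwoSidedIdeal E).jacobson, ∃ u : Eˣ,
      (u : E) = 1 + j ∧ ∀ a ∈ A, (u : E) * a * (↑u⁻¹ : E) ∈ T := by
  classical
  haveI : IsSemisimpleRing A := hA
  haveI : FiniteDimensional k A :=
    FiniteDimensional.of_injective A.val.toLinearMap Subtype.val_injective
  set J := (⊥ : TwoSidedIdeal E).jacobson with hJ
  obtain ⟨π, hπT, hπJ⟩ := exists_proj T hT
  -- the "cocycle" d
  set d : A →ₗ[k] E := (LinearMap.id - π.toLinearMap) ∘ₗ A.val.toLinearMap with hd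
  have hd_apply : ∀ a : A, d a = (a : E) - π (a : E) := fun a => rfl
  have hdJ : ∀ a : A, d a ∈ J := fun a => hπJ (a : E)
  -- Casimir element
  set e := casBasis k A
  set f := casDual k A
  set z : A := casZ k A with hzdef
  obtain ⟨w, hzw, hwz, hwcomm⟩ := casZ_inv (k := k) (A := A)
  -- the bilinear map F u v = π u * d v
  set F : A →ₗ[k] A →ₗ[k] E :=
    (LinearMap.mul k E).compl₁₂ (π.toLinearMap ∘ₗ A.val.toLinearMap) d with hF
  have hF_apply : ∀ u v : A, F u v = π (u : E) * d v := fun u v => rfl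
  -- the element W = Σ π(e i) * d (f i)
  set W : E := ∑ i, π ((e i : A) : E) * d (f i) with hW
  have hWJ : W ∈ J := by
    rw [hW]
    refine TwoSidedIdeal.finsetSum_mem _ _ _ fun i _ => ?_
    exact J.mul_mem_left _ _ (hdJ (f i))
  -- cocycle identity for d
  have d_mul : ∀ a b : A, d (b * a) = d b * (a : E) + π (b : E) * d a := by
    intro a b
    rw [hd_apply, hd_apply, hd_apply]
    push_cast
    rw [map_mul]
    noncomm_ring
  -- main identity
  have main : ∀ a : A, π (a : E) * W = W * (a : E) + π (z : E) * d a := by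
    intro a
    have hs := cas_swap F a
    have lhs : ∑ i, F (a * e i) (f i) = π (a : E) * W := by
      rw [hW, Finset.mul_sum]
      refine Finset.sum_congr rfl fun i _ => ?_
      rw [hF_apply]
      push_cast
      rw [map_mul, mul_assoc]
    have rhs : ∑ i, F (e i) (f i * a) = W * (a : E) + π (z : E) * d a := by
      have step : ∀ i, F (e i) (f i * a)
          = (π ((e i : A) : E) * d (f i)) * (a : E)
            + (π ((e i : A) : E) * π ((f i : A) : E)) * d a := by
        intro i
        rw [hF_apply, d_mul a (f i), mul_add, ← mul_assoc, ← mul_assoc]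
      rw [Finset.sum_congr rfl fun i _ => step i, Finset.sum_add_distrib]
      congr 1
      · rw [hW, Finset.sum_mul]
      · rw [← Finset.sum_mul]
        congr 1
        rw [hzdef, casZ]
        push_cast
        rw [map_sum]
        exact Finset.sum_congr rfl fun i _ => by rw [map_mul]
    rw [← lhs, hs, rhs]
  -- the element j
  set j : E := π ((w : A) : E) * W with hj
  have hjJ : j ∈ J := J.mul_mem_left _ _ hWJ
  have key : ∀ a : A, π (a : E) * j - j * (a : E) = d a := by
    intro a
    have hcomm : π ((a : A) : E) * π ((w : A) : E) = π ((w : A) : E) * π ((a : A) : E) := by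
      rw [← map_mul, ← map_mul]
      congr 1
      exact_mod_cast congrArg (Subtype.val) (hwcomm a).symm
    calc π (a : E) * j - j * (a : E)
        = π ((w : A) : E) * (π (a : E) * W - W * (a : E)) := by
          rw [hj, mul_sub, ← mul_assoc (π ((a : A) : E)), hcomm]
          noncomm_ring
      _ = π ((w : A) : E) * (π ((z : A) : E) * d a) := by
          rw [main a]
          noncomm_ring
      _ = d a := by
          rw [← mul_assoc, ← map_mul, ← Subalgebra.coe_mul, hwz]
          simp
  -- 1 + j is a unit
  have hunit : IsUnit (1 + j) := isUnit_one_add_of_mem_jacobson_bot hjJ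
  obtain ⟨u, hu⟩ := hunit
  refine ⟨j, hjJ, u, hu, ?_⟩
  intro a ha
  set a' : A := ⟨a, ha⟩ with ha'
  have hmove : (u : E) * a = π a * (u : E) := by
    rw [hu]
    have h2 : π a * j - j * a = a - π a := by
      have := key a'
      rw [hd_apply] at this
      exact this
    have h0 : (1 + j) * a - π a * (1 + j) = 0 := by
      have expand : (1 + j) * a - π a * (1 + j) = (a - π a) - (π a * j - j * a) := by
        noncomm_ring
      rw [expand, h2, sub_self]
    have := sub_eq_zero.mp h0
    exact this
  have hfin : (u : E) * a * (↑u⁻¹ : E) = π a := by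
    rw [hmove, mul_assoc]
    simp
  rw [hfin]
  exact hπT a
end

section
/- An element t ∈ ℂ transcendental over a countable subfield k ⊆ ℂ has uncountably many images under field automorphisms of ℂ fixing k; equivalently, the Aut(ℂ/k)-orbit of t is countable if and only if t is algebraic over k. -/
open Algebra
open scoped Cardinal
set_option synthInstance.maxHeartbeats 400000
set_option maxHeartbeats 1000000

noncomputable section

/-- Extend a transcendental element to a transcendence basis containing it. -/
lemma exists_basis_mem (k : Subfield ℂ) (t : ℂ) (ht : Transcendental k t) :
    ∃ B : Set ℂ, t ∈ B ∧ IsTranscendenceBasis k ((↑) : B → ℂ) := by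
  have hti : AlgebraicIndependent k ((↑) : ({t} : Set ℂ) → ℂ) := by
    rw [algebraicIndependent_unique_type_iff]
    simpa using ht
  obtain ⟨B, htB, hBmax⟩ := exists_maximal_algebraicIndependent ({t} : Set ℂ) Set.univ
    (Set.subset_univ _) hti
  refine ⟨B, htB rfl, hBmax.1.1, fun u hu hBu => ?_⟩
  simp only [Subtype.range_coe_subtype, Set.setOf_mem_eq] at *
  exact hBmax.eq_of_le ⟨hu, Set.subset_univ _⟩ hBu

lemma exists_aut (k : Subfield ℂ) (hk : (k : Set ℂ).Countable) (t s : ℂ)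
    (ht : Transcendental k t) (hs : Transcendental k s) :
    ∃ σ : ℂ ≃+* ℂ, (∀ a ∈ k, σ a = a) ∧ σ t = s := by
  obtain ⟨B, htB, hB⟩ := exists_basis_mem k t ht
  obtain ⟨C, hsC, hC⟩ := exists_basis_mem k s hs
  have hkc : (#k) ≤ ℵ₀ := by
    have := hk.to_subtype
    exact Cardinal.mk_le_aleph0
  have hcc : ℵ₀ < (#ℂ) := by
    rw [Cardinal.mk_complex]; exact Cardinal.aleph0_lt_continuum
  have hBcard : (#ℂ) = (#B) :=
    Cardinal.lift_inj.1 (IsAlgClosed.cardinal_eq_cardinal_transcendence_basis_of_aleph0_lt _ hB hkc hcc)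
  have hCcard : (#ℂ) = (#C) :=
    Cardinal.lift_inj.1 (IsAlgClosed.cardinal_eq_cardinal_transcendence_basis_of_aleph0_lt _ hC hkc hcc)
  obtain ⟨e0⟩ := Cardinal.eq.1 (hBcard.symm.trans hCcard)
  set e : B ≃ C := e0.trans (Equiv.swap (e0 ⟨t, htB⟩) ⟨s, hsC⟩) with he_def
  have he : e ⟨t, htB⟩ = ⟨s, hsC⟩ := by
    simp [he_def, Equiv.swap_apply_left]
  letI := IsAlgClosed.isAlgClosure_of_transcendence_basis _ hB
  letI := IsAlgClosed.isAlgClosure_of_transcendence_basis _ hC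
  let eAdj : adjoin k (Set.range ((↑) : B → ℂ)) ≃ₐ[k] adjoin k (Set.range ((↑) : C → ℂ)) :=
    hB.1.aevalEquiv.symm.trans ((MvPolynomial.renameEquiv k e).trans hC.1.aevalEquiv)
  refine ⟨IsAlgClosure.equivOfEquiv ℂ ℂ eAdj.toRingEquiv, ?_, ?_⟩
  · intro a ha
    have h1 : (a : ℂ) = algebraMap k ℂ ⟨a, ha⟩ := rfl
    have h3 : algebraMap k ℂ ⟨a, ha⟩ = algebraMap (adjoin k (Set.range ((↑) : B → ℂ))) ℂ
        (algebraMap k (adjoin k (Set.range ((↑) : B → ℂ))) ⟨a, ha⟩) :=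
      (IsScalarTower.algebraMap_apply (↥k) (adjoin k (Set.range ((↑) : B → ℂ))) ℂ _)
    have h4 : algebraMap k ℂ ⟨a, ha⟩ = algebraMap (adjoin k (Set.range ((↑) : C → ℂ))) ℂ
        (algebraMap k (adjoin k (Set.range ((↑) : C → ℂ))) ⟨a, ha⟩) :=
      (IsScalarTower.algebraMap_apply (↥k) (adjoin k (Set.range ((↑) : C → ℂ))) ℂ _)
    have h2 : eAdj.toRingEquiv (algebraMap k _ ⟨a, ha⟩) = algebraMap k _ ⟨a, ha⟩ :=
      eAdj.commutes _
    rw [h1, h3, IsAlgClosure.equivOfEquiv_algebraMap, h2]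
    exact h4.symm
  · have h1 : t = algebraMap (adjoin k (Set.range ((↑) : B → ℂ))) ℂ
        (hB.1.aevalEquiv (MvPolynomial.X ⟨t, htB⟩)) := by
      rw [hB.1.algebraMap_aevalEquiv, MvPolynomial.aeval_X]
    rw [h1, IsAlgClosure.equivOfEquiv_algebraMap]
    have h2 : eAdj.toRingEquiv (hB.1.aevalEquiv (MvPolynomial.X ⟨t, htB⟩)) =
        hC.1.aevalEquiv (MvPolynomial.X (e ⟨t, htB⟩)) := by
      simp [eAdj, MvPolynomial.renameEquiv_apply]
    rw [h2, hC.1.algebraMap_aevalEquiv, MvPolynomial.aeval_X, he]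

end

/-- Let `k ⊆ ℂ` be a countable subfield and `t ∈ ℂ`.  Then the orbit of `t` under field
automorphisms of `ℂ` fixing `k` pointwise is countable if and only if `t` is algebraic
over `k`; equivalently, a transcendental element has uncountably many conjugates. -/
theorem countable_orbit_iff_algebraic
    (k : Subfield ℂ) (hk : (k : Set ℂ).Countable) (t : ℂ) :
    Set.Countable {x : ℂ | ∃ σ : ℂ ≃+* ℂ, (∀ a ∈ k, σ a = a) ∧ σ t = x} ↔
      IsAlgebraic k t := by
  constructor
  · intro h
    by_contra ht
    have htrans : {x : ℂ | ¬ IsAlgebraic k x} ⊆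
        {x : ℂ | ∃ σ : ℂ ≃+* ℂ, (∀ a ∈ k, σ a = a) ∧ σ t = x} :=
      fun s hs => exists_aut k hk t s ht hs
    have halg : Set.Countable {x : ℂ | IsAlgebraic k x} := by
      have := hk.to_subtype
      exact Algebraic.countable k ℂ
    have hcu : (Set.univ : Set ℂ).Countable := by
      refine (halg.union (h.mono htrans)).mono ?_
      intro x _
      by_cases hx : IsAlgebraic k x
      · exact Or.inl hx
      · exact Or.inr hx
    haveI : Uncountable ℂ := Complex.ofReal_injective.uncountable
    exact not_countable (Set.countable_univ_iff.mp hcu)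
  · rintro ⟨p, hp, hpt⟩
    set q := p.map (algebraMap k ℂ) with hq_def
    have hq : q ≠ 0 := by
      rw [hq_def, Polynomial.map_ne_zero_iff (algebraMap (↥k) ℂ).injective]
      exact hp
    have hqt : q.eval t = 0 := by
      rw [hq_def, Polynomial.eval_map, ← Polynomial.aeval_def, hpt]
    refine Set.Countable.mono ?_ (Polynomial.finite_setOf_isRoot hq).countable
    rintro x ⟨σ, hσ, rfl⟩
    have hmap : q.map (σ : ℂ →+* ℂ) = q := by
      ext n
      rw [Polynomial.coeff_map]
      have : q.coeff n ∈ k := by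
        rw [hq_def, Polynomial.coeff_map]
        exact SetLike.coe_mem _
      exact hσ _ this
    show q.IsRoot (σ t)
    have : (q.map (σ : ℂ →+* ℂ)).eval (σ t) = σ (q.eval t) := by
      rw [Polynomial.eval_map]
      exact Polynomial.eval₂_hom (σ : ℂ →+* ℂ) t
    rw [Polynomial.IsRoot, ← hmap, this, hqt, map_zero]
end
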